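/- arXiv:2212.09210 — 4 statements merged into one kernel-verified Lean document; each statement's English description precedes it below -/
import Mathlib

section
/- Let μ₁ ≥ μ₂ ≥ μ₃ ≥ μ₄ be real numbers satisfying μ₁ + μ₂ + μ₃ + μ₄ = 0 and μ₁³ + μ₂³ + μ₃³ + μ₄³ = 0. Then μ₁ + μ₄ = 0 and μ₂ + μ₃ = 0. -/
theorem stmt_0 (μ₁ μ₂ μ₃ μ₄ : ℝ)
    (hord : μ₁ ≥ μ₂ ∧ μ₂ ≥ μ₃ ∧ μ₃ ≥ μ₄)
    (hsum : μ₁ + μ₂ + μ₃ + μ₄ = 0)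
    (hcube : μ₁ ^ 3 + μ₂ ^ 3 + μ₃ ^ 3 + μ₄ ^ 3 = 0) :
    μ₁ + μ₄ = 0 ∧ μ₂ + μ₃ = 0 := by
  obtain ⟨h12, h23, h34⟩ := hord
  have h4 : μ₄ = -μ₁ - μ₂ - μ₃ := by linarith
  subst h4
  have key : (μ₁ + μ₂) * (μ₂ + μ₃) * (μ₁ + μ₃) = 0 := by
    linear_combination (-(1 : ℝ)/3) * hcube
  have h23' : μ₂ + μ₃ = 0 := by
    rcases mul_eq_zero.mp key with h | h3
    · rcases mul_eq_zero.mp h with h1 | h2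
      · linarith
      · exact h2
    · linarith
  constructor <;> linarith
end

section
/- Let t and x be real numbers with t > 1 and 0 ≤ x < 1/6. If −t² + 6t − 34 − 16/(t−1) + 18/(t+1) + (5t² + 3t + 32 + 32/(t−1))·x ≥ 0, then t ≥ 5. -/
theorem stmt_3 (t x : ℝ) (ht : 1 < t) (hx0 : 0 ≤ x) (hx1 : x < 1 / 6)
    (h : -t ^ 2 + 6 * t - 34 - 16 / (t - 1) + 18 / (t + 1)
        + (5 * t ^ 2 + 3 * t + 32 + 32 / (t - 1)) * x ≥ 0) :
    t ≥ 5 := by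
  by_contra hc
  push_neg at hc
  have hu : (0:ℝ) < t - 1 := by linarith
  have hv : (0:ℝ) < t + 1 := by linarith
  have h2 : 0 ≤ (-t ^ 2 + 6 * t - 34 - 16 / (t - 1) + 18 / (t + 1)
        + (5 * t ^ 2 + 3 * t + 32 + 32 / (t - 1)) * x) * ((t - 1) * (t + 1)) :=
    mul_nonneg h (mul_pos hu hv).le
  have e : (-t ^ 2 + 6 * t - 34 - 16 / (t - 1) + 18 / (t + 1)
        + (5 * t ^ 2 + 3 * t + 32 + 32 / (t - 1)) * x) * ((t - 1) * (t + 1))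
      = (-t ^ 2 + 6 * t - 34) * ((t - 1) * (t + 1)) - 16 * (t + 1) + 18 * (t - 1)
        + ((5 * t ^ 2 + 3 * t + 32) * (t - 1) + 32) * (t + 1) * x := by
    field_simp
  rw [e] at h2
  have hc1 : 0 < (5 * t ^ 2 + 3 * t + 32) * (t - 1) + 32 := by nlinarith
  have hcv : 0 < ((5 * t ^ 2 + 3 * t + 32) * (t - 1) + 32) * (t + 1) :=
    mul_pos hc1 hv
  have hxb : ((5 * t ^ 2 + 3 * t + 32) * (t - 1) + 32) * (t + 1) * x
      ≤ ((5 * t ^ 2 + 3 * t + 32) * (t - 1) + 32) * (t + 1) * (1 / 6) := by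
    exact mul_le_mul_of_nonneg_left hx1.le hcv.le
  have hf : 0 ≤ t * (t - 5) * (-t ^ 2 + 34 * t - 1) := by nlinarith
  nlinarith [mul_pos (mul_pos (by linarith : (0:ℝ) < t) (by linarith : (0:ℝ) < 5 - t))
    (by nlinarith : (0:ℝ) < -t ^ 2 + 34 * t - 1)]
end

section
/- For every real number t with 5 ≤ t ≤ 17 + 12√2, one has (t² − 6t + 34 + 16/(t−1) − 18/(t+1)) / (5t² + 3t + 32 + 32/(t−1)) ≥ 0.130729. -/
theorem stmt_5 (t : ℝ) (ht5 : 5 ≤ t) (ht : t ≤ 17 + 12 * Real.sqrt 2) :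
    (t ^ 2 - 6 * t + 34 + 16 / (t - 1) - 18 / (t + 1))
      / (5 * t ^ 2 + 3 * t + 32 + 32 / (t - 1)) ≥ 0.130729 := by
  have h1 : (0:ℝ) < t - 1 := by linarith
  have h2 : (0:ℝ) < t + 1 := by linarith
  have hD : (0:ℝ) < 5 * t ^ 2 + 3 * t + 32 + 32 / (t - 1) := by
    have : 0 < 32 / (t - 1) := by positivity
    nlinarith
  rw [ge_iff_le, le_div_iff₀ hD]
  have key : 0.130729 * ((5 * t ^ 2 + 3 * t + 32) * (t - 1) + 32) * (t + 1)
      ≤ ((t ^ 2 - 6 * t + 34) * (t - 1) + 16) * (t + 1) - 18 * (t - 1) := by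
    nlinarith [mul_nonneg (by linarith : (0:ℝ) ≤ t)
        (mul_nonneg (sq_nonneg (t - 923133/100000))
          (by linarith : (0:ℝ) ≤ t + 24476043/3463550000)),
      sq_nonneg (t - 5), mul_nonneg (by linarith : (0:ℝ) ≤ t - 5) (by linarith : (0:ℝ) ≤ t)]
  have e1 : t ^ 2 - 6 * t + 34 + 16 / (t - 1) - 18 / (t + 1)
      = (((t ^ 2 - 6 * t + 34) * (t - 1) + 16) * (t + 1) - 18 * (t - 1)) / ((t - 1) * (t + 1)) := by
    field_simp
  have e2 : 5 * t ^ 2 + 3 * t + 32 + 32 / (t - 1)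
      = ((5 * t ^ 2 + 3 * t + 32) * (t - 1) + 32) / (t - 1) := by
    field_simp
  rw [e1, e2, mul_div_assoc', div_le_div_iff₀ (by positivity) (by positivity)]
  nlinarith [mul_le_mul_of_nonneg_right key h1.le]
end

section
/- Let t and x be real numbers with t > 1 and 0 < x < 1/6. If both −t² + 6t − 34 − 16/(t−1) + 18/(t+1) + (5t² + 3t + 32 + 32/(t−1))·x ≥ 0 and (10t − 1 − t²) + (5t² − 26t + 5)·x ≥ 0 hold, then x ≥ 0.130729; in particular 2/x < 15.3. -/
theorem stmt_6 (t x : ℝ) (ht : 1 < t) (hx0 : 0 < x) (hx1 : x < 1 / 6)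
    (h1 : -t ^ 2 + 6 * t - 34 - 16 / (t - 1) + 18 / (t + 1)
        + (5 * t ^ 2 + 3 * t + 32 + 32 / (t - 1)) * x ≥ 0)
    (h2 : (10 * t - 1 - t ^ 2) + (5 * t ^ 2 - 26 * t + 5) * x ≥ 0) :
    x ≥ 0.130729 ∧ 2 / x < 15.3 := by
  have hs : (0:ℝ) < t - 1 := by linarith
  have hp : (0:ℝ) < t + 1 := by linarith
  have hs' : t - 1 ≠ 0 := ne_of_gt hs
  have hp' : t + 1 ≠ 0 := ne_of_gt hp
  have e1 : (-t ^ 2 + 6 * t - 34 - 16 / (t - 1) + 18 / (t + 1)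
        + (5 * t ^ 2 + 3 * t + 32 + 32 / (t - 1)) * x) * ((t - 1) * (t + 1))
      = ((-t^2 + 6*t - 34) * (t^2 - 1) - 16*(t+1) + 18*(t-1))
        + ((5*t^2 + 3*t + 32) * (t^2 - 1) + 32*(t+1)) * x := by
    field_simp
    ring
  have H1 : ((-t^2 + 6*t - 34) * (t^2 - 1) - 16*(t+1) + 18*(t-1))
        + ((5*t^2 + 3*t + 32) * (t^2 - 1) + 32*(t+1)) * x ≥ 0 := by
    rw [← e1]
    exact mul_nonneg h1 (by positivity)
  have hB : (0:ℝ) < (5*t^2 + 3*t + 32) * (t^2 - 1) + 32*(t+1) := by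
    nlinarith [sq_nonneg t, mul_pos hs hp]
  have hxc : x ≥ 0.130729 := by
    by_contra hc
    push_neg at hc
    have hBx : (0:ℝ) < ((5*t^2 + 3*t + 32) * (t^2 - 1) + 32*(t+1)) * (0.130729 - x) :=
      mul_pos hB (by linarith)
    have key : -(((-t^2 + 6*t - 34) * (t^2 - 1) - 16*(t+1) + 18*(t-1))
          + ((5*t^2 + 3*t + 32) * (t^2 - 1) + 32*(t+1)) * (130729/1000000 : ℝ))
        = (69271/200000) * ((t-1)^2 + (-5006767/692710)*(t-1)
            + (-7927457490169/959694288200))^2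
          + (441628084072777/959694288200000000) * (t-1)
          + 244737759728506623439/2659159321516088000000000 := by
      ring
    nlinarith [sq_nonneg ((t-1)^2 + (-5006767/692710)*(t-1) + (-7927457490169/959694288200)), hs, H1, hBx, key]
  refine ⟨hxc, ?_⟩
  rw [div_lt_iff₀ hx0]
  nlinarith [hxc]
end
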